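/- arXiv:2208.11922 — 3 statements merged into one kernel-verified Lean document; each statement's English description precedes it below -/
import Mathlib

section
/- The T axiom fails for the weak ontic necessity: there is a contextualized pointed model at which [W]p holds but p fails. (I.e., [W]p → p is not valid.) -/
universe u

/-- Maximal elements of `S` with respect to the priority relation `r`:
no element of `S` is strictly above them. -/
def maxOf {α : Type u} (r : α → α → Prop) (S : Set α) : Set α :=
  {x | x ∈ S ∧ ∀ y ∈ S, ¬ r y x}

/-- The rules remaining after `k` rounds of removing maximal elements. -/
def remSet {α : Type u} (r : α → α → Prop) (L : Set α) : ℕ → Set α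
  | 0 => L
  | k + 1 => remSet r L k \ maxOf r (remSet r L k)

/-- The `k`-th level of the hierarchy of rules: the maximal elements of what remains. -/
def levelSet {α : Type u} (r : α → α → Prop) (L : Set α) (k : ℕ) : Set α :=
  maxOf r (remSet r L k)

/-- A model for SWONBT: a serial discrete rooted tree with a valuation. -/
structure TreeModel (AP : Type) : Type 1 where
  W : Type
  R : W → W → Prop
  root : W
  serial : ∀ w, ∃ v, R w v
  rooted : ∀ w, ∃! l : List W,
    l.head? = some root ∧ l.getLast? = some w ∧ List.Chain' R l
  V : AP → Set W

/-- A timeline: an infinite `R`-increasing sequence starting at the root. -/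
def Timeline {AP : Type} (M : TreeModel AP) : Type :=
  {π : ℕ → M.W // π 0 = M.root ∧ ∀ i, M.R (π i) (π (i + 1))}

/-- A context for a model: a finite set of ontic rules (sets of timelines),
an irreflexive transitive priority order on them, and a set of undefeatable
rules among the maximal ones. -/
structure Context {AP : Type} (M : TreeModel AP) where
  rules : Set (Set (Timeline M))
  rules_fin : rules.Finite
  prio : Set (Timeline M) → Set (Timeline M) → Prop
  prio_irrefl : ∀ a ∈ rules, ¬ prio a a
  prio_trans : ∀ a ∈ rules, ∀ b ∈ rules, ∀ c ∈ rules, prio a b → prio b c → prio a c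
  und : Set (Set (Timeline M))
  und_sub : und ⊆ maxOf prio rules

/-- Timelines enabled by a set of rules: their intersection
(everything, if the set of rules is empty). -/
def En {AP : Type} {M : TreeModel AP} (S : Set (Set (Timeline M))) : Set (Timeline M) :=
  ⋂₀ S

/-- Accepted timelines: those enabled by the undefeatable rules. -/
def AccSet {AP : Type} {M : TreeModel AP} (C : Context M) : Set (Timeline M) :=
  En C.und

/-- The intersection `En(ℒ₀) ∩ … ∩ En(ℒ_k)` of the first `k+1` levels of the hierarchy. -/
def ISeg {AP : Type} {M : TreeModel AP} (C : Context M) (k : ℕ) : Set (Timeline M) :=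
  ⋂ j ∈ Finset.range (k + 1), En (levelSet C.prio C.rules j)

open Classical in
/-- Expected timelines: empty if `En(ℒ₀) = ∅`; otherwise the intersection of
`En(ℒ_j)` along the longest initial segment of the hierarchy with nonempty
intersection. -/
noncomputable def ExpSet {AP : Type} {M : TreeModel AP} (C : Context M) : Set (Timeline M) :=
  if En (levelSet C.prio C.rules 0) = ∅ then ∅
  else ⋂ j ∈ {j : ℕ | ISeg C j ≠ ∅}, En (levelSet C.prio C.rules j)

/-- Formulas of the logic SWONBT. -/
inductive Formula (AP : Type) : Type where
  | atom : AP → Formula AP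
  | bot : Formula AP
  | neg : Formula AP → Formula AP
  | and : Formula AP → Formula AP → Formula AP
  | next : Formula AP → Formula AP
  | yest : Formula AP → Formula AP
  | strg : Formula AP → Formula AP
  | weak : Formula AP → Formula AP

/-- Disjunction, defined classically. -/
def Formula.or {AP : Type} (φ ψ : Formula AP) : Formula AP :=
  .neg (.and (.neg φ) (.neg ψ))

/-- `⟨S⟩φ := ¬[S]¬φ`. -/
def Formula.diaS {AP : Type} (φ : Formula AP) : Formula AP :=
  .neg (.strg (.neg φ))

/-- `⟨W⟩φ := ¬[W]¬φ`. -/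
def Formula.diaW {AP : Type} (φ : Formula AP) : Formula AP :=
  .neg (.weak (.neg φ))

/-- Truth of formulas relative to a set `AT` of accepted timelines and a set
`ET` of expected timelines (the semantics of AE pointed models). -/
def Sat {AP : Type} (M : TreeModel AP) (AT ET : Set (Timeline M)) :
    Formula AP → Timeline M → ℕ → Prop
  | .atom p, π, i => π.1 i ∈ M.V p
  | .bot, _, _ => False
  | .neg φ, π, i => ¬ Sat M AT ET φ π i
  | .and φ ψ, π, i => Sat M AT ET φ π i ∧ Sat M AT ET ψ π i
  | .next φ, π, i => Sat M AT ET φ π (i + 1)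
  | .yest φ, π, i => 0 < i ∧ Sat M AT ET φ π (i - 1)
  | .strg φ, _, i => ∀ π' ∈ AT, Sat M AT ET φ π' i
  | .weak φ, _, i => ∀ π' ∈ ET, Sat M AT ET φ π' i

/-- Truth at a contextualized pointed model `(M, C, π, i)`. -/
def CSat {AP : Type} (M : TreeModel AP) (C : Context M) (φ : Formula AP)
    (π : Timeline M) (i : ℕ) : Prop :=
  Sat M (AccSet C) (ExpSet C) φ π i

/-- Closed formulas: `χ ::= [S]φ | [W]φ | ¬χ | (χ ∧ χ)`. -/
inductive Closed {AP : Type} : Formula AP → Prop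
  | strg (φ : Formula AP) : Closed (.strg φ)
  | weak (φ : Formula AP) : Closed (.weak φ)
  | neg {χ : Formula AP} : Closed χ → Closed (.neg χ)
  | and {χ₁ χ₂ : Formula AP} : Closed χ₁ → Closed χ₂ → Closed (.and χ₁ χ₂)


namespace WeakTAux

def Rb (l l' : List Bool) : Prop := ∃ b, l' = b :: l

def pathTo : List Bool → List (List Bool)
  | [] => [[]]
  | b :: w => pathTo w ++ [b :: w]

lemma pathTo_ne_nil (w : List Bool) : pathTo w ≠ [] := by
  cases w <;> simp [pathTo]

lemma pathTo_head (w : List Bool) : (pathTo w).head? = some [] := by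
  induction w with
  | nil => rfl
  | cons b w ih =>
      rw [pathTo, List.head?_append_of_ne_nil _ (pathTo_ne_nil w)]
      exact ih

lemma pathTo_last (w : List Bool) : (pathTo w).getLast? = some w := by
  cases w with
  | nil => rfl
  | cons b w => simp [pathTo]

lemma pathTo_chain (w : List Bool) : List.Chain' Rb (pathTo w) := by
  induction w with
  | nil => exact List.isChain_singleton _
  | cons b w ih =>
      rw [pathTo, List.Chain', List.isChain_append]
      refine ⟨ih, List.isChain_singleton _, ?_⟩
      intro x hx y hy
      simp only [List.head?_cons, Option.mem_def, Option.some.injEq] at hy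
      subst hy
      rw [pathTo_last] at hx
      simp only [Option.mem_def, Option.some.injEq] at hx
      subst hx
      exact ⟨b, rfl⟩

lemma path_unique (w : List Bool) : ∀ l : List (List Bool),
    l.head? = some [] → l.getLast? = some w → List.Chain' Rb l → l = pathTo w := by
  induction w with
  | nil =>
      intro l h1 h2 h3
      rcases List.eq_nil_or_concat l with rfl | ⟨l', a, rfl⟩
      · simp at h2
      · simp only [List.concat_eq_append] at h1 h2 h3 ⊢
        rw [List.getLast?_concat] at h2
        injection h2 with h2; subst h2
        rcases List.eq_nil_or_concat l' with rfl | ⟨l'', c, rfl⟩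
        · rfl
        · exfalso
          simp only [List.concat_eq_append] at h3
          rw [List.Chain', List.isChain_append] at h3
          obtain ⟨_, _, h⟩ := h3
          obtain ⟨b, hb⟩ := h c (by simp [List.getLast?_concat]) [] rfl
          simp at hb
  | cons b w ih =>
      intro l h1 h2 h3
      rcases List.eq_nil_or_concat l with rfl | ⟨l', a, rfl⟩
      · simp at h2
      · simp only [List.concat_eq_append] at h1 h2 h3 ⊢
        rw [List.getLast?_concat] at h2
        injection h2 with h2; subst h2
        rcases List.eq_nil_or_concat l' with rfl | ⟨l'', c, rfl⟩
        · simp at h1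
        · simp only [List.concat_eq_append] at h1 h3 ⊢
          rw [List.Chain', List.isChain_append] at h3
          obtain ⟨hc1, _, h⟩ := h3
          obtain ⟨b', hb⟩ := h c (by simp [List.getLast?_concat]) (b :: w) rfl
          injection hb with hb1 hb2
          subst hb2
          have h1' : (l'' ++ [w]).head? = some [] := by
            rwa [List.head?_append_of_ne_nil _ (by simp)] at h1
          have := ih (l'' ++ [w]) h1' (by simp [List.getLast?_concat]) hc1
          rw [pathTo, this]

def Mod : TreeModel Unit where
  W := List Bool
  R := Rb
  root := []
  serial := fun w => ⟨true :: w, true, rfl⟩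
  rooted := fun w => ⟨pathTo w, ⟨pathTo_head w, pathTo_last w, pathTo_chain w⟩,
    fun l hl => path_unique w l hl.1 hl.2.1 hl.2.2⟩
  V := fun _ => {l | l.head? = some true}

def tau : Timeline Mod := ⟨fun i => List.replicate i true, rfl, fun _ => ⟨true, rfl⟩⟩

def sig : Timeline Mod := ⟨fun i => List.replicate i false, rfl, fun _ => ⟨false, rfl⟩⟩

def Ctx : Context Mod where
  rules := {{tau}}
  rules_fin := Set.finite_singleton _
  prio := fun _ _ => False
  prio_irrefl := fun _ _ h => h
  prio_trans := fun _ _ _ _ _ _ h _ => h.elim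
  und := ∅
  und_sub := Set.empty_subset _

lemma lev0 : En (levelSet Ctx.prio Ctx.rules 0) = {tau} := by
  have h : levelSet Ctx.prio Ctx.rules 0 = {{tau}} := by
    ext x
    simp [levelSet, remSet, maxOf, Ctx]
  rw [h]
  simp [En]

lemma iseg0 : ISeg Ctx 0 = {tau} := by
  simp [ISeg, lev0]

lemma exp_sub : ExpSet Ctx ⊆ {tau} := by
  rw [ExpSet]
  split
  · rename_i h
    rw [lev0] at h
    exact absurd h (by simp)
  · intro x hx
    have h0 : (0 : ℕ) ∈ {j : ℕ | ISeg Ctx j ≠ ∅} := by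
      rw [Set.mem_setOf_eq, iseg0]
      simp
    have := Set.mem_iInter₂.1 hx 0 h0
    rwa [lev0] at this

end WeakTAux

/-- the T axiom fails for the weak ontic necessity: there is a
contextualized pointed model at which `[W]p` holds but `p` fails. -/
theorem weak_T_fails :
    ∃ (AP : Type) (M : TreeModel AP) (C : Context M) (p : AP)
      (π : Timeline M) (i : ℕ),
      π ∈ AccSet C ∧
      CSat M C (.weak (.atom p)) π i ∧
      ¬ CSat M C (.atom p) π i := by
  refine ⟨Unit, WeakTAux.Mod, WeakTAux.Ctx, (), WeakTAux.sig, 1, ?_, ?_, ?_⟩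
  · intro t ht
    exact absurd ht (Set.notMem_empty t)
  · intro π' hπ'
    have := WeakTAux.exp_sub hπ'
    rw [Set.mem_singleton_iff] at this
    subst this
    show (WeakTAux.tau.1 1).head? = some true
    rfl
  · show ¬ ((WeakTAux.sig.1 1).head? = some true)
    simp [WeakTAux.sig]
end

section
/- Distribution over disjunction with closed formulas: [S](χ ∨ φ) ↔ (χ ∨ [S]φ) is valid whenever χ is a closed formula. -/
universe u

lemma closed_indep {AP : Type} {χ : Formula AP} (hχ : Closed χ)
    (M : TreeModel AP) (AT ET : Set (Timeline M)) (π π' : Timeline M) (i : ℕ) :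
    Sat M AT ET χ π i ↔ Sat M AT ET χ π' i := by
  induction hχ with
  | strg φ => simp [Sat]
  | weak φ => simp [Sat]
  | neg _ ih => simp [Sat, ih]
  | and _ _ ih1 ih2 => simp [Sat, ih1, ih2]

/-- `[S](χ ∨ φ) ↔ (χ ∨ [S]φ)` is valid whenever `χ` is a
closed formula. -/
theorem valid_strg_closed_or {AP : Type} (χ φ : Formula AP) (hχ : Closed χ)
    (M : TreeModel AP) (C : Context M) (π : Timeline M) (i : ℕ)
    (hπ : π ∈ AccSet C) :
    CSat M C (.strg (χ.or φ)) π i ↔ CSat M C (χ.or (.strg φ)) π i := by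
  simp only [CSat, Formula.or, Sat]
  constructor
  · intro h
    by_cases hc : Sat M (AccSet C) (ExpSet C) χ π i
    · intro hn; exact hn.1 hc
    · intro hn
      apply hn.2
      intro π' hπ'
      by_contra hφ
      exact h π' hπ' ⟨fun hc' => hc ((closed_indep hχ M _ _ π' π i).mp hc'), hφ⟩
  · intro h π' hπ' ⟨hc, hφ⟩
    apply h
    refine ⟨fun hc' => hc ((closed_indep hχ M _ _ π π' i).mp hc'), fun hall => hφ (hall π' hπ')⟩
end

section
/- Validity over contextualized models coincides with validity over AE pointed models: a formula φ of the language with X, Y, [S], [W] is true at all AE pointed models iff it is true at all contextualized pointed models. -/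
universe u

lemma maxOf_false {α : Type u} (S : Set α) : maxOf (fun _ _ => False) S = S := by
  ext x; simp [maxOf]

lemma maxOf_empty {α : Type u} (r : α → α → Prop) : maxOf r (∅ : Set α) = ∅ := by
  ext x; simp [maxOf]

section Aux

variable {AP : Type} {M : TreeModel AP}

lemma expSet_subset_accSet (C : Context M) : ExpSet C ⊆ AccSet C := by
  intro x hx
  unfold ExpSet at hx
  split_ifs at hx with h
  · exact absurd hx (Set.notMem_empty x)
  · have h0 : ISeg C 0 ≠ ∅ := by
      unfold ISeg
      simpa using h
    have hx0 : x ∈ En (levelSet C.prio C.rules 0) := Set.mem_iInter₂.mp hx 0 h0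
    refine Set.mem_sInter.mpr fun s hs => ?_
    exact Set.mem_sInter.mp hx0 s (C.und_sub hs)

/-- The context realizing a given pair `(AT, ET)`. -/
noncomputable def mkCtx (AT ET : Set (Timeline M)) : Context M where
  rules := {AT, ET}
  rules_fin := (Set.finite_singleton ET).insert AT
  prio := fun _ _ => False
  prio_irrefl := fun _ _ h => h
  prio_trans := fun _ _ _ _ _ _ h _ => h.elim
  und := {AT}
  und_sub := by
    rw [maxOf_false]
    intro x hx
    exact Or.inl hx

lemma mkCtx_acc (AT ET : Set (Timeline M)) : AccSet (mkCtx AT ET) = AT := by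
  simp [AccSet, mkCtx, En]

lemma mkCtx_rem (AT ET : Set (Timeline M)) (k : ℕ) :
    remSet (mkCtx AT ET).prio (mkCtx AT ET).rules (k + 1) = ∅ := by
  induction k with
  | zero =>
      show remSet _ _ 0 \ maxOf _ (remSet _ _ 0) = ∅
      simp [remSet, mkCtx, maxOf_false]
  | succ k ih =>
      show remSet _ _ (k + 1) \ maxOf _ (remSet _ _ (k + 1)) = ∅
      rw [ih]
      simp

lemma mkCtx_exp (AT ET : Set (Timeline M)) (hsub : ET ⊆ AT) :
    ExpSet (mkCtx AT ET) = ET := by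
  have hl0 : En (levelSet (mkCtx AT ET).prio (mkCtx AT ET).rules 0) = ET := by
    show En (maxOf _ (remSet _ _ 0)) = ET
    simp [En, remSet, mkCtx, maxOf_false, Set.sInter_insert,
      Set.inter_eq_self_of_subset_right hsub]
  have hlk : ∀ k, En (levelSet (mkCtx AT ET).prio (mkCtx AT ET).rules (k + 1)) = Set.univ := by
    intro k
    rw [levelSet, mkCtx_rem, maxOf_empty]
    simp [En]
  unfold ExpSet
  split_ifs with h
  · rw [hl0] at h; exact h.symm
  · rw [hl0] at h
    have hiseg : ∀ j, ISeg (mkCtx AT ET) j = ET := by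
      intro j
      unfold ISeg
      apply Set.eq_of_subset_of_subset
      · intro x hx
        have := Set.mem_iInter₂.mp hx 0 (Finset.mem_range.mpr (Nat.succ_pos j))
        rwa [hl0] at this
      · intro x hx
        refine Set.mem_iInter₂.mpr fun k _ => ?_
        cases k with
        | zero => rw [hl0]; exact hx
        | succ k => rw [hlk]; trivial
    apply Set.eq_of_subset_of_subset
    · intro x hx
      have h0mem : (0 : ℕ) ∈ {j : ℕ | ISeg (mkCtx AT ET) j ≠ ∅} := by
        simp [hiseg, h]
      have := Set.mem_iInter₂.mp hx 0 h0mem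
      rwa [hl0] at this
    · intro x hx
      refine Set.mem_iInter₂.mpr fun j _ => ?_
      cases j with
      | zero => rw [hl0]; exact hx
      | succ j => rw [hlk]; trivial

end Aux

/-- validity over AE pointed models coincides with validity over
contextualized pointed models. -/
theorem AE_validity_iff_context_validity {AP : Type} (φ : Formula AP) :
    (∀ (M : TreeModel AP) (AT ET : Set (Timeline M)) (π : Timeline M) (i : ℕ),
        AT.Nonempty → ET ⊆ AT → π ∈ AT → Sat M AT ET φ π i) ↔
    (∀ (M : TreeModel AP) (C : Context M) (π : Timeline M) (i : ℕ),
        π ∈ AccSet C → CSat M C φ π i) := by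
  constructor
  · intro hAE M C π i hπ
    exact hAE M (AccSet C) (ExpSet C) π i ⟨π, hπ⟩ (expSet_subset_accSet C) hπ
  · intro hC M AT ET π i _ hsub hπ
    have h1 := mkCtx_acc AT ET
    have h2 := mkCtx_exp AT ET hsub
    have := hC M (mkCtx AT ET) π i (h1.symm ▸ hπ)
    unfold CSat at this
    rwa [h1, h2] at this
end
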